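/- If Θ_i, Θ_j, Θ_k ∈ [0, π) satisfy cos Θ_i + cos Θ_j cos Θ_k ≥ 0 cyclically and Θ_j + Θ_k ≤ π, then the function t ↦ cos(tΘ_i) + cos(tΘ_j)cos(tΘ_k) is non-increasing on [0, 1]. -/
import Mathlib

open Real

lemma cos_aux (c : ℝ) (hc : |c| ≤ π) :
    AntitoneOn (fun t : ℝ => Real.cos (t * c)) (Set.Icc 0 1) := by
  intro a ha b hb hab
  simp only
  have h1 : Real.cos (a * c) = Real.cos (a * |c|) := by
    rw [← Real.cos_abs, ← Real.cos_abs (a * |c|), abs_mul, abs_mul, abs_abs]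
  have h2 : Real.cos (b * c) = Real.cos (b * |c|) := by
    rw [← Real.cos_abs, ← Real.cos_abs (b * |c|), abs_mul, abs_mul, abs_abs]
  rw [h1, h2]
  apply Real.cos_le_cos_of_nonneg_of_le_pi
  · exact mul_nonneg ha.1 (abs_nonneg c)
  · calc b * |c| ≤ 1 * π := by
          apply mul_le_mul hb.2 hc (abs_nonneg c) zero_le_one
      _ = π := one_mul π
  · exact mul_le_mul_of_nonneg_right hab (abs_nonneg c)

theorem gamma_antitoneOn
    (Θi Θj Θk : ℝ)
    (hi : Θi ∈ Set.Ico 0 π) (hj : Θj ∈ Set.Ico 0 π) (hk : Θk ∈ Set.Ico 0 π)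
    (hγi : 0 ≤ Real.cos Θi + Real.cos Θj * Real.cos Θk)
    (hγj : 0 ≤ Real.cos Θj + Real.cos Θk * Real.cos Θi)
    (hγk : 0 ≤ Real.cos Θk + Real.cos Θi * Real.cos Θj)
    (hjk : Θj + Θk ≤ π) :
    AntitoneOn (fun t : ℝ => Real.cos (t * Θi) + Real.cos (t * Θj) * Real.cos (t * Θk))
      (Set.Icc 0 1) := by
  have hfun : ∀ t : ℝ, Real.cos (t * Θj) * Real.cos (t * Θk)
      = (Real.cos (t * (Θj - Θk)) + Real.cos (t * (Θj + Θk))) / 2 := by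
    intro t
    rw [mul_sub, mul_add, Real.cos_add, Real.cos_sub]
    ring
  have hi' : |Θi| ≤ π := by rw [abs_of_nonneg hi.1]; exact le_of_lt hi.2
  have hsum : |Θj + Θk| ≤ π := by
    rw [abs_of_nonneg (add_nonneg hj.1 hk.1)]; exact hjk
  have hdiff : |Θj - Θk| ≤ π := by
    rw [abs_sub_le_iff]
    constructor <;> linarith [hj.1, hk.1, hj.2.le, hk.2.le]
  have h1 := cos_aux Θi hi'
  have h2 := cos_aux (Θj - Θk) hdiff
  have h3 := cos_aux (Θj + Θk) hsum
  intro a ha b hb hab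
  simp only
  rw [hfun a, hfun b]
  have := h1 ha hb hab
  have := h2 ha hb hab
  have := h3 ha hb hab
  simp only at *
  linarith
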